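/- Under the Gaussian path X_t = α_t X_1 + σ_t X_0 with X_0 ~ N(0, I) independent of X_1, the Hessian of the log-marginal density satisfies ∇_x^2 log p_t(x) = (α_t^2 / σ_t^4) · Cov[X_1 | X_t = x] − (1/σ_t^2) · I, and hence the Laplacian satisfies Δ_x log p_t(x) = (α_t^2 · tr Cov[X_1 | X_t = x] − D σ_t^2) / σ_t^4. -/

import Mathlib

open scoped BigOperators
open MeasureTheory

noncomputable def gauss (D : ℕ) (σ : ℝ) (μ x : Fin D → ℝ) : ℝ :=
  (2 * Real.pi * σ ^ 2) ^ (-(D : ℝ) / 2) * Real.exp (-(∑ i, (x i - μ i) ^ 2) / (2 * σ ^ 2))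

/-- Second partial derivative `∂_j ∂_i f`. -/
noncomputable def hess (D : ℕ) (f : (Fin D → ℝ) → ℝ) (x : Fin D → ℝ) (i j : Fin D) : ℝ :=
  fderiv ℝ (fun y => fderiv ℝ f y (Pi.single i 1)) x (Pi.single j 1)

noncomputable def gaussD (D : ℕ) (σ : ℝ) (μ x : Fin D → ℝ) : (Fin D → ℝ) →L[ℝ] ℝ :=
  gauss D σ μ x • ∑ i, ((μ i - x i) / σ ^ 2) • ContinuousLinearMap.proj (R := ℝ) (φ := fun _ : Fin D => ℝ) i

lemma gauss_hasFDerivAt (D : ℕ) (σ : ℝ) (hσ : σ ≠ 0) (μ x : Fin D → ℝ) :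
    HasFDerivAt (gauss D σ μ) (gaussD D σ μ x) x := by
  have hsum : HasFDerivAt (fun y : Fin D → ℝ => ∑ i, (y i - μ i) ^ 2)
      (∑ i, (2 * (x i - μ i)) • ContinuousLinearMap.proj (R := ℝ) (φ := fun _ : Fin D => ℝ) i) x := by
    apply HasFDerivAt.fun_sum
    intro i _
    have h1 : HasFDerivAt (fun y : Fin D → ℝ => y i - μ i)
        (ContinuousLinearMap.proj (R := ℝ) (φ := fun _ : Fin D => ℝ) i) x :=
      (hasFDerivAt_apply i x).sub_const _
    have h2 := h1.mul h1
    have : HasFDerivAt (fun y : Fin D → ℝ => (y i - μ i) ^ 2)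
        ((x i - μ i) • ContinuousLinearMap.proj (R := ℝ) (φ := fun _ : Fin D => ℝ) i
          + (x i - μ i) • ContinuousLinearMap.proj (R := ℝ) (φ := fun _ : Fin D => ℝ) i) x := by
      simp only [pow_two]
      exact h2
    exact this.congr_fderiv (by rw [two_mul, add_smul])
  have hexp : HasFDerivAt (fun y : Fin D → ℝ =>
      Real.exp (-(∑ i, (y i - μ i) ^ 2) / (2 * σ ^ 2)))
      (Real.exp (-(∑ i, (x i - μ i) ^ 2) / (2 * σ ^ 2)) •
        ((-(1 / (2 * σ ^ 2))) • ∑ i, (2 * (x i - μ i)) • ContinuousLinearMap.proj (R := ℝ) (φ := fun _ : Fin D => ℝ) i)) x := by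
    have h2 : HasFDerivAt (fun y : Fin D → ℝ => -(∑ i, (y i - μ i) ^ 2) / (2 * σ ^ 2))
        ((-(1 / (2 * σ ^ 2))) • ∑ i, (2 * (x i - μ i)) • ContinuousLinearMap.proj (R := ℝ) (φ := fun _ : Fin D => ℝ) i) x := by
      have := hsum.const_mul (-(1 / (2 * σ ^ 2)))
      refine this.congr_of_eventuallyEq (Filter.Eventually.of_forall fun y => ?_)
      ring
    exact h2.exp
  have := hexp.const_mul ((2 * Real.pi * σ ^ 2) ^ (-(D : ℝ) / 2))
  have heq : ((2 * Real.pi * σ ^ 2) ^ (-(D : ℝ) / 2)) •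
      (Real.exp (-(∑ i, (x i - μ i) ^ 2) / (2 * σ ^ 2)) •
        ((-(1 / (2 * σ ^ 2))) • ∑ i, (2 * (x i - μ i)) • ContinuousLinearMap.proj (R := ℝ) (φ := fun _ : Fin D => ℝ) i))
      = gaussD D σ μ x := by
    rw [gaussD, gauss, smul_smul, smul_smul, Finset.smul_sum, Finset.smul_sum]
    apply Finset.sum_congr rfl
    intro i _
    rw [smul_smul, smul_smul]
    congr 1
    field_simp
    ring
  rw [← heq]
  exact this

lemma gaussD_apply_single (D : ℕ) (σ : ℝ) (μ x : Fin D → ℝ) (j : Fin D) :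
    gaussD D σ μ x (Pi.single j 1) = gauss D σ μ x * ((μ j - x j) / σ ^ 2) := by
  rw [gaussD]
  simp only [ContinuousLinearMap.smul_apply, ContinuousLinearMap.sum_apply,
    ContinuousLinearMap.smul_apply, ContinuousLinearMap.proj_apply, smul_eq_mul]
  rw [Finset.sum_eq_single j]
  · simp
  · intro b _ hb
    simp [Pi.single_apply, hb]
  · simp

lemma fderiv_gauss (D : ℕ) (σ : ℝ) (hσ : σ ≠ 0) (μ x : Fin D → ℝ) (j : Fin D) :
    fderiv ℝ (fun y => gauss D σ μ y) x (Pi.single j 1)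
      = gauss D σ μ x * ((μ j - x j) / σ ^ 2) := by
  rw [(gauss_hasFDerivAt D σ hσ μ x).fderiv, gaussD_apply_single]


lemma aux1 {c s : ℝ} (hc : 0 < c) (hs : 0 ≤ s) :
    Real.sqrt s * Real.exp (-(s / c)) ≤ 1 + c := by
  rcases le_or_gt s 1 with h | h
  · have h1 : Real.sqrt s ≤ 1 := by
      rw [show (1 : ℝ) = Real.sqrt 1 by simp]
      exact Real.sqrt_le_sqrt h
    have h2 : Real.exp (-(s / c)) ≤ 1 := by
      rw [show (1 : ℝ) = Real.exp 0 by simp]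
      apply Real.exp_le_exp.mpr
      have : 0 ≤ s / c := div_nonneg hs hc.le
      linarith
    nlinarith [Real.sqrt_nonneg s, (Real.exp_pos (-(s / c))).le]
  · have hsc : 0 < s / c := div_pos (by linarith) hc
    have h1 : Real.sqrt s ≤ s := by
      calc Real.sqrt s ≤ Real.sqrt (s ^ 2) := Real.sqrt_le_sqrt (by nlinarith)
        _ = s := Real.sqrt_sq (by linarith)
    have hle : s / c ≤ Real.exp (s / c) := by
      have := Real.add_one_le_exp (s / c); linarith
    have h2 : Real.exp (-(s / c)) ≤ c / s := by
      rw [Real.exp_neg]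
      have := inv_anti₀ hsc hle
      rwa [show (s / c)⁻¹ = c / s by rw [inv_div]] at this
    have h3 : Real.sqrt s * Real.exp (-(s / c)) ≤ s * (c / s) := by
      apply mul_le_mul h1 h2 (Real.exp_pos _).le (by linarith)
    rw [mul_div_cancel₀ c (by linarith : s ≠ 0)] at h3
    linarith

lemma aux2 {c s : ℝ} (hc : 0 < c) (hs : 0 ≤ s) :
    s * Real.exp (-(s / c)) ≤ 1 + 4 * c ^ 2 := by
  rcases le_or_gt s 1 with h | h
  · have h2 : Real.exp (-(s / c)) ≤ 1 := by
      rw [show (1 : ℝ) = Real.exp 0 by simp]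
      apply Real.exp_le_exp.mpr
      have : 0 ≤ s / c := div_nonneg hs hc.le
      linarith
    nlinarith [(Real.exp_pos (-(s / c))).le]
  · have hs0 : (0:ℝ) < s := by linarith
    have hexp : s ^ 2 / (4 * c ^ 2) ≤ Real.exp (s / c) := by
      have h4 : Real.exp (s / c) = Real.exp (s / (2 * c)) ^ 2 := by
        rw [← Real.exp_nat_mul]
        congr 1
        field_simp
        ring
      have h5 : s / (2 * c) ≤ Real.exp (s / (2 * c)) := by
        have := Real.add_one_le_exp (s / (2 * c))
        linarith
      have h6 : 0 ≤ s / (2 * c) := by positivity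
      calc s ^ 2 / (4 * c ^ 2) = (s / (2 * c)) ^ 2 := by field_simp; ring
        _ ≤ Real.exp (s / (2 * c)) ^ 2 := by nlinarith
        _ = Real.exp (s / c) := h4.symm
    have h2 : Real.exp (-(s / c)) ≤ 4 * c ^ 2 / s ^ 2 := by
      rw [Real.exp_neg]
      have hq : 0 < s ^ 2 / (4 * c ^ 2) := by positivity
      have := inv_anti₀ hq hexp
      rwa [show (s ^ 2 / (4 * c ^ 2))⁻¹ = 4 * c ^ 2 / s ^ 2 by rw [inv_div]] at this
    have h3 : s * Real.exp (-(s / c)) ≤ s * (4 * c ^ 2 / s ^ 2) := by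
      apply mul_le_mul_of_nonneg_left h2 hs0.le
    have h4 : s * (4 * c ^ 2 / s ^ 2) = 4 * c ^ 2 / s := by
      field_simp
    have h5 : 4 * c ^ 2 / s ≤ 4 * c ^ 2 := div_le_self (by positivity) h.le
    rw [h4] at h3
    linarith

lemma gauss_pos (D : ℕ) {σ : ℝ} (hσ : 0 < σ) (μ x : Fin D → ℝ) : 0 < gauss D σ μ x := by
  rw [gauss]
  have : (0:ℝ) < 2 * Real.pi * σ ^ 2 := by positivity
  positivity

lemma gauss_eq (D : ℕ) (σ : ℝ) (μ x : Fin D → ℝ) :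
    gauss D σ μ x = (2 * Real.pi * σ ^ 2) ^ (-(D : ℝ) / 2) *
      Real.exp (-((∑ i, (x i - μ i) ^ 2) / (2 * σ ^ 2))) := by
  rw [gauss]
  congr 1
  congr 1
  exact neg_div _ _

lemma norm_proj_le (D : ℕ) (i : Fin D) :
    ‖ContinuousLinearMap.proj (R := ℝ) (φ := fun _ : Fin D => ℝ) i‖ ≤ 1 := by
  apply ContinuousLinearMap.opNorm_le_bound _ zero_le_one
  intro v
  rw [one_mul]
  exact norm_le_pi_norm v i

lemma gaussD_norm_le (D : ℕ) {σ : ℝ} (hσ : 0 < σ) (μ x : Fin D → ℝ) :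
    ‖gaussD D σ μ x‖ ≤ gauss D σ μ x * ((∑ i, |μ i - x i|) / σ ^ 2) := by
  rw [gaussD]
  refine le_trans (ContinuousLinearMap.opNorm_smul_le _ _) ?_
  rw [Real.norm_eq_abs, abs_of_pos (gauss_pos D hσ μ x)]
  apply mul_le_mul_of_nonneg_left _ (gauss_pos D hσ μ x).le
  calc ‖∑ i, ((μ i - x i) / σ ^ 2) • ContinuousLinearMap.proj (R := ℝ) (φ := fun _ : Fin D => ℝ) i‖
      ≤ ∑ i, ‖((μ i - x i) / σ ^ 2) • ContinuousLinearMap.proj (R := ℝ) (φ := fun _ : Fin D => ℝ) i‖ :=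
        norm_sum_le _ _
    _ ≤ ∑ i, |μ i - x i| / σ ^ 2 := by
        apply Finset.sum_le_sum
        intro i _
        refine le_trans (ContinuousLinearMap.opNorm_smul_le _ _) ?_
        rw [Real.norm_eq_abs, abs_div, abs_of_pos (by positivity : (0:ℝ) < σ ^ 2)]
        calc |μ i - x i| / σ ^ 2 * ‖ContinuousLinearMap.proj (R := ℝ) (φ := fun _ : Fin D => ℝ) i‖
            ≤ |μ i - x i| / σ ^ 2 * 1 := by
              apply mul_le_mul_of_nonneg_left (norm_proj_le D i) (by positivity)
          _ = |μ i - x i| / σ ^ 2 := mul_one _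
    _ = (∑ i, |μ i - x i|) / σ ^ 2 := by rw [Finset.sum_div]

lemma sq_le_S (D : ℕ) (μ x : Fin D → ℝ) (k : Fin D) :
    (μ k - x k) ^ 2 ≤ ∑ i, (x i - μ i) ^ 2 := by
  have h := Finset.single_le_sum (f := fun i => (x i - μ i) ^ 2)
    (fun i _ => sq_nonneg _) (Finset.mem_univ k)
  have h' : (x k - μ k) ^ 2 ≤ ∑ i, (x i - μ i) ^ 2 := h
  nlinarith [h']

lemma sum_abs_le (D : ℕ) (μ x : Fin D → ℝ) :
    ∑ k, |μ k - x k| ≤ D * Real.sqrt (∑ i, (x i - μ i) ^ 2) := by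
  calc ∑ k, |μ k - x k| ≤ ∑ _k : Fin D, Real.sqrt (∑ i, (x i - μ i) ^ 2) := by
        apply Finset.sum_le_sum
        intro k _
        exact Real.abs_le_sqrt (sq_le_S D μ x k)
    _ = D * Real.sqrt (∑ i, (x i - μ i) ^ 2) := by
        rw [Finset.sum_const, Finset.card_univ, Fintype.card_fin, nsmul_eq_mul]

lemma key1 (D : ℕ) {σ : ℝ} (hσ : 0 < σ) :
    ∃ K : ℝ, ∀ μ x : Fin D → ℝ,
      gauss D σ μ x * ((∑ k, |μ k - x k|) / σ ^ 2) ≤ K := by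
  set c := (2 * Real.pi * σ ^ 2) ^ (-(D : ℝ) / 2) with hc
  have hcpos : 0 < c := by
    have : (0:ℝ) < 2 * Real.pi * σ ^ 2 := by positivity
    positivity
  refine ⟨c * D * (1 + 2 * σ ^ 2) / σ ^ 2, fun μ x => ?_⟩
  set S := ∑ i, (x i - μ i) ^ 2 with hS
  have hS0 : 0 ≤ S := Finset.sum_nonneg fun i _ => sq_nonneg _
  have h1 : ∑ k, |μ k - x k| ≤ D * Real.sqrt S := sum_abs_le D μ x
  have h2 : Real.sqrt S * Real.exp (-(S / (2 * σ ^ 2))) ≤ 1 + 2 * σ ^ 2 :=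
    aux1 (by positivity) hS0
  rw [gauss_eq, ← hS, ← hc]
  have hexp : (0:ℝ) < Real.exp (-(S / (2 * σ ^ 2))) := Real.exp_pos _
  have h3 : (0:ℝ) ≤ ∑ k, |μ k - x k| := Finset.sum_nonneg fun k _ => abs_nonneg _
  have hsq : (0:ℝ) ≤ Real.sqrt S := Real.sqrt_nonneg _
  calc c * Real.exp (-(S / (2 * σ ^ 2))) * ((∑ k, |μ k - x k|) / σ ^ 2)
      ≤ c * Real.exp (-(S / (2 * σ ^ 2))) * ((D * Real.sqrt S) / σ ^ 2) := by
        apply mul_le_mul_of_nonneg_left _ (by positivity)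
        gcongr
    _ = (c * D / σ ^ 2) * (Real.sqrt S * Real.exp (-(S / (2 * σ ^ 2)))) := by ring
    _ ≤ (c * D / σ ^ 2) * (1 + 2 * σ ^ 2) := by
        apply mul_le_mul_of_nonneg_left h2 (by positivity)
    _ = c * D * (1 + 2 * σ ^ 2) / σ ^ 2 := by ring

lemma key2 (D : ℕ) {σ : ℝ} (hσ : 0 < σ) {α : ℝ} (hα : α ≠ 0) (x0 : Fin D → ℝ) (i : Fin D) :
    ∃ K : ℝ, ∀ x1 : Fin D → ℝ, ∀ x ∈ Metric.ball x0 1,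
      |x1 i| * (gauss D σ (α • x1) x * ((∑ k, |(α • x1) k - x k|) / σ ^ 2)) ≤ K := by
  set c := (2 * Real.pi * σ ^ 2) ^ (-(D : ℝ) / 2) with hc
  have hcpos : 0 < c := by
    have : (0:ℝ) < 2 * Real.pi * σ ^ 2 := by positivity
    positivity
  set B := ‖x0‖ + 1 with hB
  have hB1 : (1:ℝ) ≤ B := by
    rw [hB]; linarith [norm_nonneg x0]
  refine ⟨c * D / (|α| * σ ^ 2) * ((1 + 4 * (2 * σ ^ 2) ^ 2) + B * (1 + 2 * σ ^ 2)),
    fun x1 x hx => ?_⟩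
  set μ := α • x1 with hμ
  set S := ∑ k, (x k - μ k) ^ 2 with hS
  have hS0 : 0 ≤ S := Finset.sum_nonneg fun k _ => sq_nonneg _
  have hsq : (0:ℝ) ≤ Real.sqrt S := Real.sqrt_nonneg _
  have hexp : (0:ℝ) < Real.exp (-(S / (2 * σ ^ 2))) := Real.exp_pos _
  -- |x1 i| bound
  have hxi : |x i| ≤ B := by
    have h1 : |x i - x0 i| ≤ ‖x - x0‖ := by
      have := norm_le_pi_norm (x - x0) i
      simpa using this
    have h2 : ‖x - x0‖ < 1 := by
      rw [← dist_eq_norm]; exact Metric.mem_ball.mp hx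
    have h3 : |x0 i| ≤ ‖x0‖ := by
      have := norm_le_pi_norm x0 i; simpa using this
    have := abs_sub_abs_le_abs_sub (x i) (x0 i)
    rw [hB]
    calc |x i| ≤ |x0 i| + |x i - x0 i| := by
          have h4 := abs_add_le (x0 i) (x i - x0 i)
          simpa using h4
      _ ≤ ‖x0‖ + 1 := by linarith
  have hμi : |μ i - x i| ≤ Real.sqrt S := Real.abs_le_sqrt (sq_le_S D μ x i)
  have hx1i : |x1 i| ≤ (Real.sqrt S + B) / |α| := by
    rw [le_div_iff₀ (abs_pos.mpr hα)]
    have hμx : |x1 i| * |α| = |μ i| := by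
      have : μ i = α * x1 i := rfl
      rw [this, abs_mul, mul_comm]
    rw [hμx]
    calc |μ i| ≤ |μ i - x i| + |x i| := by
          have h5 := abs_add_le (μ i - x i) (x i)
          simpa using h5
      _ ≤ Real.sqrt S + B := add_le_add hμi hxi
  have hSabs : ∑ k, |μ k - x k| ≤ D * Real.sqrt S := sum_abs_le D μ x
  have hg : gauss D σ μ x * ((∑ k, |μ k - x k|) / σ ^ 2)
      ≤ c * Real.exp (-(S / (2 * σ ^ 2))) * ((D * Real.sqrt S) / σ ^ 2) := by
    rw [gauss_eq, ← hS, ← hc]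
    apply mul_le_mul_of_nonneg_left _ (by positivity)
    gcongr
  have h0 : (0:ℝ) ≤ ∑ k, |μ k - x k| := Finset.sum_nonneg fun k _ => abs_nonneg _
  have ha2 : S * Real.exp (-(S / (2 * σ ^ 2))) ≤ 1 + 4 * (2 * σ ^ 2) ^ 2 :=
    aux2 (by positivity) hS0
  have ha1 : Real.sqrt S * Real.exp (-(S / (2 * σ ^ 2))) ≤ 1 + 2 * σ ^ 2 :=
    aux1 (by positivity) hS0
  calc |x1 i| * (gauss D σ μ x * ((∑ k, |μ k - x k|) / σ ^ 2))
      ≤ ((Real.sqrt S + B) / |α|) * (c * Real.exp (-(S / (2 * σ ^ 2))) * ((D * Real.sqrt S) / σ ^ 2)) := by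
        apply mul_le_mul hx1i hg
          (mul_nonneg (gauss_pos D hσ μ x).le (by positivity))
          (div_nonneg (by linarith) (abs_nonneg α))
    _ = (c * D / (|α| * σ ^ 2)) * ((Real.sqrt S * Real.sqrt S) * Real.exp (-(S / (2 * σ ^ 2)))
          + B * (Real.sqrt S * Real.exp (-(S / (2 * σ ^ 2))))) := by ring
    _ = (c * D / (|α| * σ ^ 2)) * (S * Real.exp (-(S / (2 * σ ^ 2)))
          + B * (Real.sqrt S * Real.exp (-(S / (2 * σ ^ 2))))) := by
        rw [Real.mul_self_sqrt hS0]
    _ ≤ (c * D / (|α| * σ ^ 2)) * ((1 + 4 * (2 * σ ^ 2) ^ 2) + B * (1 + 2 * σ ^ 2)) := by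
        apply mul_le_mul_of_nonneg_left _ (by positivity)
        have hb0 : (0:ℝ) ≤ B := by linarith
        nlinarith [mul_le_mul_of_nonneg_left ha1 hb0]

lemma diff_int (D : ℕ) {σ α : ℝ} (hσ : 0 < σ) (w q : (Fin D → ℝ) → ℝ) (x0 : Fin D → ℝ)
    (hint : ∀ x, Integrable (fun x1 => w x1 * gauss D σ (α • x1) x * q x1))
    (bound : (Fin D → ℝ) → ℝ) (hbi : Integrable bound)
    (hb : ∀ x1 : Fin D → ℝ, ∀ x ∈ Metric.ball x0 1,
      |w x1 * q x1| * (gauss D σ (α • x1) x * ((∑ k, |(α • x1) k - x k|) / σ ^ 2)) ≤ bound x1) :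
    DifferentiableAt ℝ (fun y => ∫ x1, w x1 * gauss D σ (α • x1) y * q x1) x0 := by
  have hmeas' : AEStronglyMeasurable
      (fun x1 : Fin D → ℝ => (w x1 * q x1) • gaussD D σ (α • x1) x0) volume := by
    have hMc : Continuous (fun x1 : Fin D → ℝ =>
        ∑ i, (((α • x1) i - x0 i) / σ ^ 2) • ContinuousLinearMap.proj (R := ℝ) (φ := fun _ : Fin D => ℝ) i) := by
      apply continuous_finset_sum
      intro i _
      refine Continuous.smul (f := fun x1 : Fin D → ℝ => ((α • x1) i - x0 i) / σ ^ 2) (g := fun _ => ContinuousLinearMap.proj (R := ℝ) (φ := fun _ : Fin D => ℝ) i) ?_ continuous_const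
      have : Continuous fun x1 : Fin D → ℝ => x1 i := continuous_apply i
      fun_prop
    have heq : (fun x1 : Fin D → ℝ => (w x1 * q x1) • gaussD D σ (α • x1) x0)
        = fun x1 => (w x1 * gauss D σ (α • x1) x0 * q x1) •
            (∑ i, (((α • x1) i - x0 i) / σ ^ 2) • ContinuousLinearMap.proj (R := ℝ) (φ := fun _ : Fin D => ℝ) i) := by
      funext x1
      rw [gaussD, smul_smul]
      congr 1
      ring
    rw [heq]
    exact ((hint x0).aestronglyMeasurable).smul hMc.aestronglyMeasurable
  have hbnd : ∀ᵐ x1 : Fin D → ℝ, ∀ x ∈ Metric.ball x0 1,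
      ‖(w x1 * q x1) • gaussD D σ (α • x1) x‖ ≤ bound x1 := by
    apply Filter.Eventually.of_forall
    intro x1 x hx
    calc ‖(w x1 * q x1) • gaussD D σ (α • x1) x‖
        ≤ ‖w x1 * q x1‖ * ‖gaussD D σ (α • x1) x‖ := ContinuousLinearMap.opNorm_smul_le _ _
      _ ≤ |w x1 * q x1| * (gauss D σ (α • x1) x * ((∑ k, |(α • x1) k - x k|) / σ ^ 2)) := by
          rw [Real.norm_eq_abs]
          exact mul_le_mul_of_nonneg_left (gaussD_norm_le D hσ _ _) (abs_nonneg _)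
      _ ≤ bound x1 := hb x1 x hx
  have hdiff : ∀ᵐ x1 : Fin D → ℝ, ∀ x ∈ Metric.ball x0 1,
      HasFDerivAt (fun y => w x1 * gauss D σ (α • x1) y * q x1)
        ((w x1 * q x1) • gaussD D σ (α • x1) x) x := by
    apply Filter.Eventually.of_forall
    intro x1 x _
    have h1 := (gauss_hasFDerivAt D σ (ne_of_gt hσ) (α • x1) x).const_mul (w x1 * q x1)
    have heq : (fun y => w x1 * gauss D σ (α • x1) y * q x1)
        = fun y => (w x1 * q x1) * gauss D σ (α • x1) y := by
      funext y; ring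
    rw [heq]
    exact h1
  have h := hasFDerivAt_integral_of_dominated_of_fderiv_le (𝕜 := ℝ)
      (F := fun x x1 => w x1 * gauss D σ (α • x1) x * q x1)
      (F' := fun x x1 => (w x1 * q x1) • gaussD D σ (α • x1) x)
      (x₀ := x0) (bound := bound) (μ := volume) (Metric.ball_mem_nhds x0 zero_lt_one)
      (Filter.Eventually.of_forall fun x => (hint x).aestronglyMeasurable)
      (hint x0) hmeas' hbnd hbi hdiff
  exact h.differentiableAt

lemma gauss_le (D : ℕ) {σ : ℝ} (hσ : 0 < σ) (μ x : Fin D → ℝ) :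
    gauss D σ μ x ≤ (2 * Real.pi * σ ^ 2) ^ (-(D : ℝ) / 2) := by
  rw [gauss]
  have hc : (0:ℝ) < (2 * Real.pi * σ ^ 2) ^ (-(D : ℝ) / 2) := by
    have : (0:ℝ) < 2 * Real.pi * σ ^ 2 := by positivity
    positivity
  have hS0 : (0:ℝ) ≤ ∑ i, (x i - μ i) ^ 2 := Finset.sum_nonneg fun i _ => sq_nonneg _
  have : Real.exp (-(∑ i, (x i - μ i) ^ 2) / (2 * σ ^ 2)) ≤ 1 := by
    rw [show (1:ℝ) = Real.exp 0 by simp]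
    apply Real.exp_le_exp.mpr
    rw [neg_div]
    have : (0:ℝ) ≤ (∑ i, (x i - μ i) ^ 2) / (2 * σ ^ 2) := by positivity
    linarith
  nlinarith

lemma diff_p (D : ℕ) {σ α : ℝ} (hσ : 0 < σ) (q : (Fin D → ℝ) → ℝ)
    (hq0 : ∀ y, 0 ≤ q y) (hq : Integrable q)
    (hp_int : ∀ x, Integrable (fun x1 => gauss D σ (α • x1) x * q x1)) (x0 : Fin D → ℝ) :
    DifferentiableAt ℝ (fun y => ∫ x1, gauss D σ (α • x1) y * q x1) x0 := by
  obtain ⟨K, hK⟩ := key1 D hσ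
  have h := diff_int D hσ (fun _ => 1) q x0
    (fun x => by simpa using hp_int x)
    (fun x1 => K * q x1) (hq.const_mul K)
    (by
      intro x1 x hx
      have h1 := hK (α • x1) x
      have h2 : (0:ℝ) ≤ gauss D σ (α • x1) x * ((∑ k, |(α • x1) k - x k|) / σ ^ 2) :=
        mul_nonneg (gauss_pos D hσ _ _).le
          (div_nonneg (Finset.sum_nonneg fun k _ => abs_nonneg _) (by positivity))
      have h3 : |(1:ℝ) * q x1| = q x1 := by rw [one_mul, abs_of_nonneg (hq0 x1)]
      rw [h3]
      calc q x1 * (gauss D σ (α • x1) x * ((∑ k, |(α • x1) k - x k|) / σ ^ 2))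
          ≤ q x1 * K := mul_le_mul_of_nonneg_left h1 (hq0 x1)
        _ = K * q x1 := mul_comm _ _)
  simpa using h

lemma diff_N (D : ℕ) {σ α : ℝ} (hσ : 0 < σ) (q : (Fin D → ℝ) → ℝ)
    (hq0 : ∀ y, 0 ≤ q y) (hq : Integrable q)
    (hm_int : ∀ x (i : Fin D), Integrable (fun x1 => x1 i * gauss D σ (α • x1) x * q x1))
    (x0 : Fin D → ℝ) (i : Fin D) :
    DifferentiableAt ℝ (fun y => ∫ x1, x1 i * gauss D σ (α • x1) y * q x1) x0 := by
  rcases eq_or_ne α 0 with rfl | hα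
  · -- α = 0
    set c := (2 * Real.pi * σ ^ 2) ^ (-(D : ℝ) / 2) with hc
    have hcpos : 0 < c := by
      have : (0:ℝ) < 2 * Real.pi * σ ^ 2 := by positivity
      positivity
    set g0 := gauss D σ 0 x0 with hg0
    have hg0pos : 0 < g0 := gauss_pos D hσ _ _
    have hint1 : Integrable (fun x1 : Fin D → ℝ => x1 i * q x1) := by
      have h1 := (hm_int x0 i).const_mul g0⁻¹
      have heq : (fun x1 : Fin D → ℝ => g0⁻¹ * (x1 i * gauss D σ ((0:ℝ) • x1) x0 * q x1))
          = fun x1 => x1 i * q x1 := by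
        funext x1
        rw [zero_smul, ← hg0]
        field_simp
      rwa [heq] at h1
    have hint2 : Integrable (fun x1 : Fin D → ℝ => |x1 i * q x1|) := hint1.abs
    set K0 := c * (∑ k, (|x0 k| + 1)) / σ ^ 2 with hK0
    apply diff_int D hσ (fun x1 => x1 i) q x0 (fun x => hm_int x i)
      (fun x1 => K0 * |x1 i * q x1|) (hint2.const_mul K0)
    intro x1 x hx
    have hA : (0:ℝ) ≤ |x1 i * q x1| := abs_nonneg _
    have hinner : gauss D σ ((0:ℝ) • x1) x * ((∑ k, |((0:ℝ) • x1) k - x k|) / σ ^ 2) ≤ K0 := by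
      rw [zero_smul]
      have hgup : gauss D σ 0 x ≤ c := gauss_le D hσ _ _
      have hsum : (∑ k, |(0 : Fin D → ℝ) k - x k|) ≤ ∑ k, (|x0 k| + 1) := by
        apply Finset.sum_le_sum
        intro k _
        have h1 : |x k - x0 k| ≤ ‖x - x0‖ := by
          have := norm_le_pi_norm (x - x0) k; simpa using this
        have h2 : ‖x - x0‖ < 1 := by rw [← dist_eq_norm]; exact Metric.mem_ball.mp hx
        have h3 : |x k| ≤ |x0 k| + |x k - x0 k| := by
          have := abs_add_le (x0 k) (x k - x0 k); simpa using this
        have h4 : |(0 : Fin D → ℝ) k - x k| = |x k| := by simp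
        rw [h4]; linarith
      have hsn : (0:ℝ) ≤ ∑ k, |(0 : Fin D → ℝ) k - x k| :=
        Finset.sum_nonneg fun k _ => abs_nonneg _
      rw [hK0]
      calc gauss D σ 0 x * ((∑ k, |(0 : Fin D → ℝ) k - x k|) / σ ^ 2)
          ≤ c * ((∑ k, (|x0 k| + 1)) / σ ^ 2) := by
            apply mul_le_mul hgup _ (by positivity) hcpos.le
            gcongr
        _ = c * (∑ k, (|x0 k| + 1)) / σ ^ 2 := by ring
    calc |x1 i * q x1| * (gauss D σ ((0:ℝ) • x1) x * ((∑ k, |((0:ℝ) • x1) k - x k|) / σ ^ 2))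
        ≤ |x1 i * q x1| * K0 := mul_le_mul_of_nonneg_left hinner hA
      _ = K0 * |x1 i * q x1| := mul_comm _ _
  · -- α ≠ 0
    obtain ⟨K, hK⟩ := key2 D hσ hα x0 i
    have hqK : Integrable (fun x1 : Fin D → ℝ => K * q x1) := hq.const_mul K
    apply diff_int D hσ (fun x1 => x1 i) q x0 (fun x => hm_int x i)
      (fun x1 => K * q x1) hqK
    intro x1 x hx
    have h1 := hK x1 x hx
    have heq : |x1 i * q x1| = q x1 * |x1 i| := by
      rw [abs_mul, abs_of_nonneg (hq0 x1)]; ring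
    rw [heq]
    have h2 : (0:ℝ) ≤ gauss D σ (α • x1) x * ((∑ k, |(α • x1) k - x k|) / σ ^ 2) :=
      mul_nonneg (gauss_pos D hσ _ _).le
        (div_nonneg (Finset.sum_nonneg fun k _ => abs_nonneg _) (by positivity))
    calc q x1 * |x1 i| * (gauss D σ (α • x1) x * ((∑ k, |(α • x1) k - x k|) / σ ^ 2))
        = q x1 * (|x1 i| * (gauss D σ (α • x1) x * ((∑ k, |(α • x1) k - x k|) / σ ^ 2))) := by ring
      _ ≤ q x1 * K := mul_le_mul_of_nonneg_left h1 (hq0 x1)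
      _ = K * q x1 := mul_comm _ _

lemma q_integrable {D : ℕ} (q : (Fin D → ℝ) → ℝ) (hq1 : ∫ y, q y = 1) :
    Integrable q := by
  by_contra h
  rw [integral_undef h] at hq1
  exact one_ne_zero hq1.symm


/-- **Hessian and Laplacian of the log-marginal (second-order Tweedie).**
`∇² log p_t(x) = (α²/σ⁴) Cov[X₁|X_t=x] − (1/σ²) I`, and hence
`Δ log p_t(x) = (α² tr Cov[X₁|X_t=x] − D σ²)/σ⁴`. -/
theorem stmt4 (D : ℕ) (α σ : ℝ) (hσ : 0 < σ)
    (q : (Fin D → ℝ) → ℝ) (hq0 : ∀ y, 0 ≤ q y) (hq1 : ∫ y, q y = 1)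
    (p : (Fin D → ℝ) → ℝ)
    (hp : ∀ x, p x = ∫ x1, gauss D σ (α • x1) x * q x1)
    (hp_pos : ∀ x, 0 < p x)
    (hp_int : ∀ x, Integrable (fun x1 => gauss D σ (α • x1) x * q x1))
    (hm_int : ∀ x i, Integrable (fun x1 => x1 i * gauss D σ (α • x1) x * q x1))
    (hm2_int : ∀ x i j, Integrable (fun x1 => x1 i * x1 j * gauss D σ (α • x1) x * q x1))
    (m : (Fin D → ℝ) → Fin D → ℝ)
    (hm : ∀ x i, m x i = (∫ x1, x1 i * gauss D σ (α • x1) x * q x1) / p x)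
    (C : (Fin D → ℝ) → Matrix (Fin D) (Fin D) ℝ)
    (hC : ∀ x i j, C x i j
        = (∫ x1, x1 i * x1 j * gauss D σ (α • x1) x * q x1) / p x - m x i * m x j)
    -- differentiation under the integral sign
    (hswap_p : ∀ x j, fderiv ℝ p x (Pi.single j 1)
        = ∫ x1, fderiv ℝ (fun y => gauss D σ (α • x1) y) x (Pi.single j 1) * q x1)
    (hswap_m : ∀ x i j,
        fderiv ℝ (fun y => ∫ x1, x1 i * gauss D σ (α • x1) y * q x1) x (Pi.single j 1)
        = ∫ x1, x1 i * fderiv ℝ (fun y => gauss D σ (α • x1) y) x (Pi.single j 1) * q x1) :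
    (∀ x i j, hess D (fun y => Real.log (p y)) x i j
        = (α ^ 2 / σ ^ 4) * C x i j - (1 / σ ^ 2) * (if i = j then 1 else 0))
    ∧ (∀ x, ∑ i, hess D (fun y => Real.log (p y)) x i i
        = (α ^ 2 * Matrix.trace (C x) - D * σ ^ 2) / σ ^ 4) := by
  have hσ' : σ ≠ 0 := ne_of_gt hσ
  have hq : Integrable q := q_integrable q hq1
  have hpd : ∀ x, DifferentiableAt ℝ p x := by
    intro x
    have hpfun : p = fun y => ∫ x1, gauss D σ (α • x1) y * q x1 := funext hp
    rw [hpfun]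
    exact diff_p D hσ q hq0 hq hp_int x
  have hNd : ∀ x i, DifferentiableAt ℝ
      (fun y => ∫ x1, x1 i * gauss D σ (α • x1) y * q x1) x :=
    fun x i => diff_N D hσ q hq0 hq hm_int x i
  -- first-order formulas
  have hfp : ∀ y (i : Fin D), fderiv ℝ p y (Pi.single i 1)
      = (α * (∫ x1, x1 i * gauss D σ (α • x1) y * q x1) - y i * p y) / σ ^ 2 := by
    intro y i
    rw [hswap_p y i]
    have h1 : (fun x1 : Fin D → ℝ =>
        fderiv ℝ (fun z => gauss D σ (α • x1) z) y (Pi.single i 1) * q x1)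
        = fun x1 => (α / σ ^ 2) * (x1 i * gauss D σ (α • x1) y * q x1)
            - (y i / σ ^ 2) * (gauss D σ (α • x1) y * q x1) := by
      funext x1
      rw [fderiv_gauss D σ hσ' (α • x1) y i]
      have hsm : (α • x1) i = α * x1 i := rfl
      rw [hsm]
      field_simp
    rw [h1, integral_sub ((hm_int y i).const_mul _) ((hp_int y).const_mul _),
      integral_const_mul, integral_const_mul, ← hp y]
    field_simp
  have hfN : ∀ y (i j : Fin D),
      fderiv ℝ (fun z => ∫ x1, x1 i * gauss D σ (α • x1) z * q x1) y (Pi.single j 1)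
      = (α * (∫ x1, x1 i * x1 j * gauss D σ (α • x1) y * q x1)
          - y j * (∫ x1, x1 i * gauss D σ (α • x1) y * q x1)) / σ ^ 2 := by
    intro y i j
    rw [hswap_m y i j]
    have h1 : (fun x1 : Fin D → ℝ =>
        x1 i * fderiv ℝ (fun z => gauss D σ (α • x1) z) y (Pi.single j 1) * q x1)
        = fun x1 => (α / σ ^ 2) * (x1 i * x1 j * gauss D σ (α • x1) y * q x1)
            - (y j / σ ^ 2) * (x1 i * gauss D σ (α • x1) y * q x1) := by
      funext x1
      rw [fderiv_gauss D σ hσ' (α • x1) y j]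
      have hsm : (α • x1) j = α * x1 j := rfl
      rw [hsm]
      field_simp
    rw [h1, integral_sub ((hm2_int y i j).const_mul _) ((hm_int y i).const_mul _),
      integral_const_mul, integral_const_mul]
    field_simp
  -- gradient of log p
  have hlog : ∀ (i : Fin D), (fun y => fderiv ℝ (fun z => Real.log (p z)) y (Pi.single i 1))
      = fun y => (α * ((∫ x1, x1 i * gauss D σ (α • x1) y * q x1) / p y) - y i) / σ ^ 2 := by
    intro i
    funext y
    have hL := ((hpd y).hasFDerivAt.log (hp_pos y).ne')
    rw [hL.fderiv]
    rw [ContinuousLinearMap.smul_apply, smul_eq_mul, hfp y i]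
    have hpy : p y ≠ 0 := (hp_pos y).ne'
    field_simp
  have key : ∀ x (i j : Fin D), hess D (fun y => Real.log (p y)) x i j
      = (α ^ 2 / σ ^ 4) * C x i j - (1 / σ ^ 2) * (if i = j then 1 else 0) := by
    intro x i j
    have hpx : p x ≠ 0 := (hp_pos x).ne'
    rw [hess, hlog i]
    -- differentiate y ↦ (α * (Ni y / p y) - y i) / σ²
    have hN' := (hNd x i).hasFDerivAt
    have hp' := (hpd x).hasFDerivAt
    have hinv : HasFDerivAt (fun y => (p y)⁻¹)
        ((-((p x) ^ 2)⁻¹) • fderiv ℝ p x) x := by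
      have := (hasDerivAt_inv hpx).comp_hasFDerivAt x hp'
      exact this
    have hmul := hN'.fun_mul hinv
    have hconst := hmul.const_mul α
    have hsub := hconst.fun_sub (hasFDerivAt_apply i x)
    have hdiv := hsub.const_mul ((σ ^ 2)⁻¹)
    have hfun : (fun y => (α * ((∫ x1, x1 i * gauss D σ (α • x1) y * q x1) / p y) - y i) / σ ^ 2)
        = fun y => (σ ^ 2)⁻¹ * (α * ((∫ x1, x1 i * gauss D σ (α • x1) y * q x1) * (p y)⁻¹) - y i) := by
      funext y
      rw [div_eq_mul_inv, eq_comm, mul_comm, div_eq_mul_inv]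
    rw [hfun, hdiv.fderiv]
    simp only [ContinuousLinearMap.smul_apply, ContinuousLinearMap.sub_apply,
      ContinuousLinearMap.add_apply, ContinuousLinearMap.proj_apply, smul_eq_mul]
    rw [hfN x i j, hfp x j, hC x i j, hm x i, hm x j, Pi.single_apply]
    by_cases hij : i = j
    · simp only [if_pos hij]
      field_simp
      ring
    · simp only [if_neg hij]
      field_simp
      ring
  refine ⟨key, fun x => ?_⟩
  have hsum : ∑ i, hess D (fun y => Real.log (p y)) x i i
      = ∑ i : Fin D, ((α ^ 2 / σ ^ 4) * C x i i - (1 / σ ^ 2)) := by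
    apply Finset.sum_congr rfl
    intro i _
    rw [key x i i, if_pos rfl, mul_one]
  rw [hsum, Finset.sum_sub_distrib, ← Finset.mul_sum, Finset.sum_const, Finset.card_univ,
    Fintype.card_fin, nsmul_eq_mul]
  have htr : Matrix.trace (C x) = ∑ i, C x i i := rfl
  rw [htr]
  field_simp
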